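/- For every M ∈ W, regard M as a real-linear endomorphism of ℝ⁸ ≅ ℍ² via left matrix multiplication, and let I₁, I₂ be the endomorphisms of ℝ⁸ acting on each ℍ factor by right quaternion multiplication by e₁ = −i and e₂ = −j respectively. Then the compositions M∘I₁ and M∘I₂ are skew-symmetric endomorphisms of ℝ⁸ which lie in the infinitesimal stabilizer 𝔞 of Ψ₀ (i.e. in Lie(Spin(7))). -/

import Mathlib

/- STATEMENT 16: For M ∈ W (a traceless self-adjoint 2×2 quaternionic matrix,
acting on ℝ⁸ ≅ ℍ² by left matrix multiplication) and I₁, I₂ right multiplication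
by e₁ = −i, e₂ = −j on each ℍ factor, the compositions M∘I₁ and M∘I₂ are
skew-symmetric endomorphisms of ℝ⁸ lying in the infinitesimal stabilizer 𝔞 of Ψ₀
(i.e. in Lie(Spin(7))). -/

open Quaternion

noncomputable section

/-- ℝ⁸ as column vectors ℍ². -/
abbrev V8 := Fin 2 → ℍ[ℝ]

/-- e₁ = −i. -/
def e1 : ℍ[ℝ] := ⟨0, -1, 0, 0⟩
/-- e₂ = −j. -/
def e2 : ℍ[ℝ] := ⟨0, 0, -1, 0⟩

/-- Coordinates of a quaternion in the basis `e₀ = 1, e₁ = −i, e₂ = −j, e₃ = −k`. -/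
def qc : Fin 4 → ℍ[ℝ] → ℝ :=
  ![fun q => q.re, fun q => -q.imI, fun q => -q.imJ, fun q => -q.imK]

def cx (i : Fin 4) : V8 → ℝ := fun p => qc i (p 0)
def cy (i : Fin 4) : V8 → ℝ := fun p => qc i (p 1)

def w2 (f g : V8 → ℝ) : V8 → V8 → ℝ := fun u v => f u * g v - f v * g u

def w22 (a b : V8 → V8 → ℝ) : V8 → V8 → V8 → V8 → ℝ := fun v1 v2 v3 v4 =>
  a v1 v2 * b v3 v4 - a v1 v3 * b v2 v4 + a v1 v4 * b v2 v3 +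
  a v2 v3 * b v1 v4 - a v2 v4 * b v1 v3 + a v3 v4 * b v1 v2

def ox1 : V8 → V8 → ℝ := fun u v => w2 (cx 0) (cx 1) u v + w2 (cx 2) (cx 3) u v
def ox2 : V8 → V8 → ℝ := fun u v => w2 (cx 0) (cx 2) u v - w2 (cx 1) (cx 3) u v
def ox3 : V8 → V8 → ℝ := fun u v => w2 (cx 0) (cx 3) u v + w2 (cx 1) (cx 2) u v
def oy1 : V8 → V8 → ℝ := fun u v => w2 (cy 0) (cy 1) u v + w2 (cy 2) (cy 3) u v
def oy2 : V8 → V8 → ℝ := fun u v => w2 (cy 0) (cy 2) u v - w2 (cy 1) (cy 3) u v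
def oy3 : V8 → V8 → ℝ := fun u v => w2 (cy 0) (cy 3) u v + w2 (cy 1) (cy 2) u v

/-- Ψ₀ = dx⁰¹²³ + dy⁰¹²³ + ω₁ˣ∧ω₁ʸ + ω₂ˣ∧ω₂ʸ − ω₃ˣ∧ω₃ʸ. -/
def Psi0 : V8 → V8 → V8 → V8 → ℝ := fun v1 v2 v3 v4 =>
  w22 (w2 (cx 0) (cx 1)) (w2 (cx 2) (cx 3)) v1 v2 v3 v4 +
  w22 (w2 (cy 0) (cy 1)) (w2 (cy 2) (cy 3)) v1 v2 v3 v4 +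
  w22 ox1 oy1 v1 v2 v3 v4 + w22 ox2 oy2 v1 v2 v3 v4 - w22 ox3 oy3 v1 v2 v3 v4

/-- The Euclidean inner product on ℝ⁸ ≅ ℍ². -/
def dot (u v : V8) : ℝ := ∑ i : Fin 2, (u i * star (v i)).re

/-- Skew-symmetry with respect to the Euclidean inner product. -/
def IsSkew (T : V8 → V8) : Prop := ∀ u v : V8, dot (T u) v = - dot u (T v)

/-- Membership in the infinitesimal stabilizer 𝔞 of Ψ₀ (the derivation property). -/
def StabilizesPsi0 (T : V8 → V8) : Prop :=
  ∀ v1 v2 v3 v4 : V8,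
    Psi0 (T v1) v2 v3 v4 + Psi0 v1 (T v2) v3 v4 +
      Psi0 v1 v2 (T v3) v4 + Psi0 v1 v2 v3 (T v4) = 0


lemma qc0' (q : ℍ[ℝ]) : qc 0 q = q.re := rfl
lemma qc1' (q : ℍ[ℝ]) : qc 1 q = -q.imI := rfl
lemma qc2' (q : ℍ[ℝ]) : qc 2 q = -q.imJ := rfl
lemma qc3' (q : ℍ[ℝ]) : qc 3 q = -q.imK := rfl
lemma e1_re' : e1.re = 0 := rfl
lemma e1_imI' : e1.imI = -1 := rfl
lemma e1_imJ' : e1.imJ = 0 := rfl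
lemma e1_imK' : e1.imK = 0 := rfl
lemma e2_re' : e2.re = 0 := rfl
lemma e2_imI' : e2.imI = 0 := rfl
lemma e2_imJ' : e2.imJ = -1 := rfl
lemma e2_imK' : e2.imK = 0 := rfl

set_option maxHeartbeats 8000000 in
lemma skew_aux (M : Matrix (Fin 2) (Fin 2) ℍ[ℝ]) (e : ℍ[ℝ]) (he : e.re = 0)
    (hW : (M 0 0).im = 0 ∧ M 1 1 = -M 0 0 ∧ M 0 1 = star (M 1 0)) :
    (IsSkew fun v => M.mulVec fun j => v j * e) := by
  obtain ⟨h0, h11, h01⟩ := hW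
  have hI : (M 0 0).imI = 0 := by have := congrArg QuaternionAlgebra.imI h0; simpa using this
  have hJ : (M 0 0).imJ = 0 := by have := congrArg QuaternionAlgebra.imJ h0; simpa using this
  have hK : (M 0 0).imK = 0 := by have := congrArg QuaternionAlgebra.imK h0; simpa using this
  intro u v
  simp only [dot, Matrix.mulVec, dotProduct, Fin.sum_univ_two, h11, h01]
  simp only [Quaternion.re_mul, Quaternion.imI_mul, Quaternion.imJ_mul, Quaternion.imK_mul,
    Quaternion.re_add, Quaternion.imI_add, Quaternion.imJ_add, Quaternion.imK_add,
    Quaternion.re_neg, Quaternion.imI_neg, Quaternion.imJ_neg, Quaternion.imK_neg,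
    Quaternion.re_star, Quaternion.imI_star, Quaternion.imJ_star, Quaternion.imK_star,
    hI, hJ, hK, he]
  ring

set_option maxHeartbeats 8000000 in
lemma stab_aux1 (M : Matrix (Fin 2) (Fin 2) ℍ[ℝ])
    (hW : (M 0 0).im = 0 ∧ M 1 1 = -M 0 0 ∧ M 0 1 = star (M 1 0)) :
    (StabilizesPsi0 fun v => M.mulVec fun j => v j * e1) := by
  obtain ⟨h0, h11, h01⟩ := hW
  have hI : (M 0 0).imI = 0 := by have := congrArg QuaternionAlgebra.imI h0; simpa using this
  have hJ : (M 0 0).imJ = 0 := by have := congrArg QuaternionAlgebra.imJ h0; simpa using this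
  have hK : (M 0 0).imK = 0 := by have := congrArg QuaternionAlgebra.imK h0; simpa using this
  intro v1 v2 v3 v4
  simp only [Psi0, w22, w2, ox1, ox2, ox3, oy1, oy2, oy3, cx, cy, qc0', qc1', qc2', qc3',
    Matrix.mulVec, dotProduct, Fin.sum_univ_two, h11, h01]
  simp only [Quaternion.re_mul, Quaternion.imI_mul, Quaternion.imJ_mul, Quaternion.imK_mul,
    Quaternion.re_add, Quaternion.imI_add, Quaternion.imJ_add, Quaternion.imK_add,
    Quaternion.re_neg, Quaternion.imI_neg, Quaternion.imJ_neg, Quaternion.imK_neg,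
    Quaternion.re_star, Quaternion.imI_star, Quaternion.imJ_star, Quaternion.imK_star,
    hI, hJ, hK, e1_re', e1_imI', e1_imJ', e1_imK']
  ring

set_option maxHeartbeats 8000000 in
lemma stab_aux2 (M : Matrix (Fin 2) (Fin 2) ℍ[ℝ])
    (hW : (M 0 0).im = 0 ∧ M 1 1 = -M 0 0 ∧ M 0 1 = star (M 1 0)) :
    (StabilizesPsi0 fun v => M.mulVec fun j => v j * e2) := by
  obtain ⟨h0, h11, h01⟩ := hW
  have hI : (M 0 0).imI = 0 := by have := congrArg QuaternionAlgebra.imI h0; simpa using this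
  have hJ : (M 0 0).imJ = 0 := by have := congrArg QuaternionAlgebra.imJ h0; simpa using this
  have hK : (M 0 0).imK = 0 := by have := congrArg QuaternionAlgebra.imK h0; simpa using this
  intro v1 v2 v3 v4
  simp only [Psi0, w22, w2, ox1, ox2, ox3, oy1, oy2, oy3, cx, cy, qc0', qc1', qc2', qc3',
    Matrix.mulVec, dotProduct, Fin.sum_univ_two, h11, h01]
  simp only [Quaternion.re_mul, Quaternion.imI_mul, Quaternion.imJ_mul, Quaternion.imK_mul,
    Quaternion.re_add, Quaternion.imI_add, Quaternion.imJ_add, Quaternion.imK_add,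
    Quaternion.re_neg, Quaternion.imI_neg, Quaternion.imJ_neg, Quaternion.imK_neg,
    Quaternion.re_star, Quaternion.imI_star, Quaternion.imJ_star, Quaternion.imK_star,
    hI, hJ, hK, e2_re', e2_imI', e2_imJ', e2_imK']
  ring

theorem WI1_WI2_in_spin7 (M : Matrix (Fin 2) (Fin 2) ℍ[ℝ])
    (hW : (M 0 0).im = 0 ∧ M 1 1 = -M 0 0 ∧ M 0 1 = star (M 1 0)) :
    (IsSkew fun v => M.mulVec fun j => v j * e1) ∧
    (StabilizesPsi0 fun v => M.mulVec fun j => v j * e1) ∧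
    (IsSkew fun v => M.mulVec fun j => v j * e2) ∧
    (StabilizesPsi0 fun v => M.mulVec fun j => v j * e2) := by
  exact ⟨skew_aux M e1 rfl hW, stab_aux1 M hW, skew_aux M e2 rfl hW, stab_aux2 M hW⟩
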